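/- arXiv:2207.11197 — 2 statements merged into one kernel-verified Lean document; each statement's English description precedes it below -/
import Mathlib

section
/- Let R = C[[x,y]], J = (P,Q) an ideal with M := R/J finite-dimensional over C, and f ∈ R with f² ∈ J. Set τ := dim_C R/(f,P,Q) and μ := dim_C M. Then τ ≤ μ ≤ 2τ. -/
open Module

set_option maxHeartbeats 1000000 in
/-- algebraic core of Proposition 4.1: for `R = ℂ[[x,y]]`, `J = (P,Q)` with
`M = R/J` finite dimensional over `ℂ`, and `f ∈ R` with `f² ∈ J`, setting
`μ = dim_ℂ R/J` and `τ = dim_ℂ R/(f,P,Q)`, one has `τ ≤ μ ≤ 2τ`. -/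
theorem stmt_5 (P Q f : MvPowerSeries (Fin 2) ℂ)
    (hfin : FiniteDimensional ℂ (MvPowerSeries (Fin 2) ℂ ⧸ (Ideal.span {P, Q})))
    (hBS : f ^ 2 ∈ Ideal.span {P, Q}) :
    finrank ℂ (MvPowerSeries (Fin 2) ℂ ⧸ (Ideal.span {f, P, Q}))
      ≤ finrank ℂ (MvPowerSeries (Fin 2) ℂ ⧸ (Ideal.span {P, Q})) ∧
    finrank ℂ (MvPowerSeries (Fin 2) ℂ ⧸ (Ideal.span {P, Q}))
      ≤ 2 * finrank ℂ (MvPowerSeries (Fin 2) ℂ ⧸ (Ideal.span {f, P, Q})) := by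
  set J : Ideal (MvPowerSeries (Fin 2) ℂ) := Ideal.span {P, Q} with hJ
  set I : Ideal (MvPowerSeries (Fin 2) ℂ) := Ideal.span {f, P, Q} with hI
  have hle : J ≤ I := Ideal.span_mono (by
    intro x hx
    simp only [Set.mem_insert_iff, Set.mem_singleton_iff] at hx ⊢
    tauto)
  have hfI : f ∈ I := Ideal.subset_span (by simp)
  -- the algebra hom from R/J to R/I
  let ψa : (MvPowerSeries (Fin 2) ℂ ⧸ J) →ₐ[ℂ] (MvPowerSeries (Fin 2) ℂ ⧸ I) :=
    Ideal.quotientMapₐ I (AlgHom.id ℂ (MvPowerSeries (Fin 2) ℂ)) (by simpa using hle)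
  let ψ : (MvPowerSeries (Fin 2) ℂ ⧸ J) →ₗ[ℂ] (MvPowerSeries (Fin 2) ℂ ⧸ I) := ψa.toLinearMap
  have hψmk : ∀ r : MvPowerSeries (Fin 2) ℂ, ψ (Ideal.Quotient.mk J r) = Ideal.Quotient.mk I r := fun r => rfl
  have hψsurj : Function.Surjective ψ := by
    intro b
    obtain ⟨r, rfl⟩ := Ideal.Quotient.mk_surjective b
    exact ⟨Ideal.Quotient.mk J r, rfl⟩
  -- multiplication by f on R/J
  set a : MvPowerSeries (Fin 2) ℂ ⧸ J := Ideal.Quotient.mk J f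
  let σ : (MvPowerSeries (Fin 2) ℂ ⧸ J) →ₗ[ℂ] (MvPowerSeries (Fin 2) ℂ ⧸ J) := LinearMap.mulLeft ℂ a
  have ha2 : a * a = 0 := by
    have : (Ideal.Quotient.mk J) (f ^ 2) = 0 := Ideal.Quotient.eq_zero_iff_mem.mpr hBS
    simpa [a, pow_two] using this
  -- ker ψ = range σ
  have hker : LinearMap.ker ψ = LinearMap.range σ := by
    ext x
    obtain ⟨r, rfl⟩ := Ideal.Quotient.mk_surjective x
    simp only [LinearMap.mem_ker, LinearMap.mem_range, hψmk]
    constructor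
    · intro h
      have hrI : r ∈ I := Ideal.Quotient.eq_zero_iff_mem.mp h
      have hIdef : I = Ideal.span {f} ⊔ J := by
        rw [hI, hJ, Ideal.span_insert]
      rw [hIdef] at hrI
      obtain ⟨u, hu, v, hv, rfl⟩ := Submodule.mem_sup.mp hrI
      obtain ⟨c, rfl⟩ := Ideal.mem_span_singleton'.mp hu
      refine ⟨Ideal.Quotient.mk J c, ?_⟩
      have : (Ideal.Quotient.mk J) v = 0 := Ideal.Quotient.eq_zero_iff_mem.mpr hv
      simp [σ, LinearMap.mulLeft_apply, a, map_add, this, mul_comm, ← map_mul]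
    · rintro ⟨y, hy⟩
      obtain ⟨c, rfl⟩ := Ideal.Quotient.mk_surjective y
      have : (Ideal.Quotient.mk J) (f * c) = Ideal.Quotient.mk J r := by
        simpa [σ, LinearMap.mulLeft_apply, a, ← map_mul] using hy
      have h2 : r - f * c ∈ J := by
        rwa [← Ideal.Quotient.eq_zero_iff_mem, map_sub, sub_eq_zero, eq_comm]
      have : r ∈ I := by
        have : r = f * c + (r - f * c) := by ring
        rw [this]
        exact I.add_mem (I.mul_mem_right c hfI) (hle h2)
      exact Ideal.Quotient.eq_zero_iff_mem.mpr this
  -- range σ ≤ ker σ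
  have hrk : LinearMap.range σ ≤ LinearMap.ker σ := by
    rintro x ⟨y, rfl⟩
    simp [σ, LinearMap.mulLeft_apply, ← mul_assoc, ha2]
  haveI : FiniteDimensional ℂ (MvPowerSeries (Fin 2) ℂ ⧸ I) := Module.Finite.of_surjective ψ hψsurj
  -- rank-nullity for σ
  have h1 : finrank ℂ (LinearMap.range σ) + finrank ℂ (LinearMap.ker σ)
      = finrank ℂ (MvPowerSeries (Fin 2) ℂ ⧸ J) := LinearMap.finrank_range_add_finrank_ker σ
  -- finrank of R/I via ψ
  have h2 : finrank ℂ (MvPowerSeries (Fin 2) ℂ ⧸ I) + finrank ℂ (LinearMap.ker ψ) = finrank ℂ (MvPowerSeries (Fin 2) ℂ ⧸ J) := by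
    have e : ((MvPowerSeries (Fin 2) ℂ ⧸ J) ⧸ LinearMap.ker ψ) ≃ₗ[ℂ] (MvPowerSeries (Fin 2) ℂ ⧸ I) :=
      LinearMap.quotKerEquivOfSurjective ψ hψsurj
    rw [← e.finrank_eq]
    exact Submodule.finrank_quotient_add_finrank _
  rw [hker] at h2
  have hτ : finrank ℂ (MvPowerSeries (Fin 2) ℂ ⧸ I) + finrank ℂ (LinearMap.range σ) = finrank ℂ (MvPowerSeries (Fin 2) ℂ ⧸ J) := h2
  have hrange_le : finrank ℂ (LinearMap.range σ) ≤ finrank ℂ (LinearMap.ker σ) :=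
    Submodule.finrank_mono hrk
  constructor
  · omega
  · omega
end

section
/- Let R = C[[x,y]], J = (P,Q) with M := R/J finite-dimensional, f ∈ R with f² ∈ J. With σ : M → M multiplication by f̄, one has μ = 2τ if and only if ker σ = (f̄), where μ = dim_C M and τ = dim_C R/(f,P,Q). -/
set_option maxHeartbeats 1000000
set_option synthInstance.maxHeartbeats 400000

open Module

/-- with `R = ℂ[[x,y]]`, `J = (P,Q)`, `M = R/J` finite dimensional, `f² ∈ J`,
and `σ : M → M` multiplication by `f̄`, one has `μ = 2τ` iff `ker σ = (f̄)`. -/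
theorem stmt_7 (P Q f : MvPowerSeries (Fin 2) ℂ)
    (hfin : FiniteDimensional ℂ (MvPowerSeries (Fin 2) ℂ ⧸ (Ideal.span {P, Q})))
    (hBS : f ^ 2 ∈ Ideal.span {P, Q}) :
    finrank ℂ (MvPowerSeries (Fin 2) ℂ ⧸ (Ideal.span {P, Q}))
        = 2 * finrank ℂ (MvPowerSeries (Fin 2) ℂ ⧸ (Ideal.span {f, P, Q}))
      ↔ LinearMap.ker (LinearMap.mulLeft ℂ (Ideal.Quotient.mk (Ideal.span {P, Q}) f))
          = Submodule.restrictScalars ℂ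
              (Ideal.span {Ideal.Quotient.mk (Ideal.span {P, Q}) f}) := by
  set J : Ideal (MvPowerSeries (Fin 2) ℂ) := Ideal.span {P, Q} with hJ
  set fb := Ideal.Quotient.mk J f with hfb
  set σ := LinearMap.mulLeft ℂ fb with hσ
  set F : Submodule ℂ (MvPowerSeries (Fin 2) ℂ ⧸ J) :=
    Submodule.restrictScalars ℂ (Ideal.span {fb}) with hF
  have hf2 : fb ^ 2 = 0 := by
    rw [hfb, ← map_pow]
    exact Ideal.Quotient.eq_zero_iff_mem.mpr hBS
  -- F ⊆ ker σ
  have hFK : F ≤ LinearMap.ker σ := by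
    intro x hx
    obtain ⟨c, rfl⟩ := Ideal.mem_span_singleton.mp hx
    simp only [LinearMap.mem_ker, hσ, LinearMap.mulLeft_apply]
    rw [← mul_assoc, ← sq, hf2, zero_mul]
  -- range σ = F
  have hrange : LinearMap.range σ = F := by
    ext x
    simp only [LinearMap.mem_range, hσ, LinearMap.mulLeft_apply, hF,
      Submodule.restrictScalars_mem, Ideal.mem_span_singleton, Dvd.dvd]
    exact ⟨fun ⟨y, hy⟩ => ⟨y, hy.symm⟩, fun ⟨y, hy⟩ => ⟨y, hy.symm⟩⟩
  -- τ = finrank of (R⧸J) ⧸ F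
  have hτ : finrank ℂ (MvPowerSeries (Fin 2) ℂ ⧸ (Ideal.span {f, P, Q}))
      = finrank ℂ ((MvPowerSeries (Fin 2) ℂ ⧸ J) ⧸ F) := by
    have h1 : (Ideal.span {f, P, Q} : Ideal (MvPowerSeries (Fin 2) ℂ))
        = J ⊔ Ideal.span {f} := by
      rw [hJ, show ({f, P, Q} : Set (MvPowerSeries (Fin 2) ℂ)) = {f} ∪ {P, Q} by rfl,
        Ideal.span_union, sup_comm]
    have h2 : (Ideal.span {f} : Ideal (MvPowerSeries (Fin 2) ℂ)).map
        (Ideal.Quotient.mkₐ ℂ J) = Ideal.span {fb} := by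
      rw [Ideal.map_span, Set.image_singleton]; rfl
    have e1 : (MvPowerSeries (Fin 2) ℂ ⧸ (Ideal.span {f, P, Q})) ≃ₗ[ℂ]
        ((MvPowerSeries (Fin 2) ℂ ⧸ J) ⧸
          (Ideal.span {fb} : Ideal (MvPowerSeries (Fin 2) ℂ ⧸ J))) :=
      (((Ideal.quotientEquivAlgOfEq ℂ h1).trans
        (DoubleQuot.quotQuotEquivQuotSupₐ ℂ J (Ideal.span {f})).symm).trans
        (Ideal.quotientEquivAlgOfEq ℂ h2)).toLinearEquiv
    have e2 : ((MvPowerSeries (Fin 2) ℂ ⧸ J) ⧸ F) ≃ₗ[ℂ]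
        ((MvPowerSeries (Fin 2) ℂ ⧸ J) ⧸
          (Ideal.span {fb} : Ideal (MvPowerSeries (Fin 2) ℂ ⧸ J))) :=
      Submodule.Quotient.restrictScalarsEquiv ℂ _
    rw [e1.finrank_eq, e2.finrank_eq]
  have hrn := LinearMap.finrank_range_add_finrank_ker σ
  rw [hrange] at hrn
  have hq := Submodule.finrank_quotient_add_finrank F
  have hk : finrank ℂ (LinearMap.ker σ) = finrank ℂ ((MvPowerSeries (Fin 2) ℂ ⧸ J) ⧸ F) := by
    omega
  constructor
  · intro hμ
    rw [hτ] at hμ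
    symm
    apply Submodule.eq_of_le_of_finrank_le hFK
    omega
  · intro heq
    have h3 : finrank ℂ (LinearMap.ker σ) = finrank ℂ F := by rw [heq]
    rw [hτ]
    omega
end
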